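/- Let (H, ⟨·,·⟩) be a finite-dimensional real inner product space and D : H × H → ℝ a positive semidefinite symmetric bilinear form. Fix λ' ≥ λ > 0 and let P : H → H be the orthogonal projection onto the span of eigenvectors of D with eigenvalues in [0, λ']. Define D̃(u, v) := D(Pu, Pv) + λ⟨(1−P)u, (1−P)v⟩. Then D ≥ D̃ (i.e., D(u,u) ≥ D̃(u,u) for all u ∈ H), and for any subspace L ⊆ H and any j ∈ {1, …, dim L}, the j-th smallest eigenvalue of D̃ restricted to L satisfies λⱼ(D̃|_L) ≥ min{λ, λⱼ(D)}. -/

import Mathlib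

open Finset

/-- The supremum of the Rayleigh quotient `B(v,v)/‖v‖²` of a (quadratic) form `B`
over the nonzero vectors of a subspace `V`. -/
noncomputable def rayleighSup {E : Type*} [NormedAddCommGroup E] [InnerProductSpace ℝ E]
    (B : E → E → ℝ) (V : Submodule ℝ E) : ℝ :=
  ⨆ v : {v : E // v ∈ V ∧ v ≠ 0}, B v v / ‖(v : E)‖ ^ 2

/-- The `j`-th smallest eigenvalue (`j` counted from `1`) of a symmetric form `B`
restricted to the subspace `L`, characterized by the minimax principle:
the infimum over `j`-dimensional subspaces `V ⊆ L` of the supremum of the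
Rayleigh quotient on `V`. -/
noncomputable def minimaxEigOn {E : Type*} [NormedAddCommGroup E] [InnerProductSpace ℝ E]
    (B : E → E → ℝ) (L : Submodule ℝ E) (j : ℕ) : ℝ :=
  ⨅ V : {V : Submodule ℝ E // V ≤ L ∧ Module.finrank ℝ V = j}, rayleighSup B V

private lemma aux_min_div (lam a s t : ℝ) (hl : 0 < lam) (ha : 0 ≤ a) (hs : 0 < s)
    (ht : 0 ≤ t) : min lam (a / s) ≤ (a + lam * t) / (s + t) := by
  have hst : 0 < s + t := by linarith
  rcases le_total lam (a / s) with h | h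
  · rw [min_eq_left h, le_div_iff₀ hst]
    rw [le_div_iff₀ hs] at h
    nlinarith
  · rw [min_eq_right h, div_le_div_iff₀ hs hst]
    rw [div_le_iff₀ hs] at h
    nlinarith

/-- **Comparison with the truncated form `D̃`.**
Let `D` be a positive semidefinite symmetric bilinear form on a finite-dimensional real
inner product space `E`, with orthonormal eigenbasis `b` and eigenvalues `μe`.  For
`0 < λ ≤ λ'`, let `P` be the orthogonal projection onto the span of the eigenvectors with
eigenvalue `≤ λ'`, and let `D̃(u,v) = D(Pu, Pv) + λ⟨(1−P)u, (1−P)v⟩`.  Then `D ≥ D̃`, and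
for every subspace `L` and `1 ≤ j ≤ dim L`, `λⱼ(D̃|_L) ≥ min{λ, λⱼ(D)}`. -/
theorem stmt5 {E : Type*} [NormedAddCommGroup E] [InnerProductSpace ℝ E]
    [FiniteDimensional ℝ E] {ι : Type*} [Fintype ι]
    (D : E →ₗ[ℝ] E →ₗ[ℝ] ℝ)
    (hsymm : ∀ u v, D u v = D v u) (hpsd : ∀ u, 0 ≤ D u u)
    (b : OrthonormalBasis ι ℝ E) (μe : ι → ℝ)
    (heig : ∀ i v, D (b i) v = μe i * (inner ℝ (b i) v : ℝ))
    (lam lam' : ℝ) (hlam : 0 < lam) (hlam' : lam ≤ lam')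
    (P : E → E)
    (hP : ∀ u, P u = ∑ i ∈ Finset.univ.filter (fun i => μe i ≤ lam'),
      (inner ℝ (b i) u : ℝ) • b i)
    (Dt : E → E → ℝ)
    (hDt : ∀ u v, Dt u v = D (P u) (P v) + lam * (inner ℝ (u - P u) (v - P v) : ℝ)) :
    (∀ u, Dt u u ≤ D u u) ∧
    ∀ (L : Submodule ℝ E) (j : ℕ), 1 ≤ j → j ≤ Module.finrank ℝ L →
      min lam (minimaxEigOn (fun u v => D u v) (⊤ : Submodule ℝ E) j) ≤
        minimaxEigOn Dt L j := by
  classical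
  set s' : Finset ι := Finset.univ.filter (fun i => μe i ≤ lam') with hs'
  set c : E → ι → ℝ := fun u i => (inner ℝ (b i) u : ℝ) with hc
  have hbb : ∀ i k : ι, (inner ℝ (b i) (b k) : ℝ) = if i = k then 1 else 0 :=
    orthonormal_iff_ite.mp b.orthonormal
  have hmu : ∀ i, 0 ≤ μe i := by
    intro i
    have h1 := hpsd (b i)
    rw [heig, hbb i i] at h1
    simpa using h1
  -- coordinates of P u
  have hPc : ∀ u i, (inner ℝ (b i) (P u) : ℝ) = if i ∈ s' then c u i else 0 := by
    intro u i
    rw [hP u, inner_sum]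
    simp only [inner_smul_right, hbb, mul_ite, mul_one, mul_zero]
    rw [Finset.sum_ite_eq s' i (fun k => (inner ℝ (b k) u : ℝ))]
  have hQc : ∀ u i, (inner ℝ (b i) (u - P u) : ℝ) = if i ∈ s' then 0 else c u i := by
    intro u i
    rw [inner_sub_right, hPc]
    split <;> simp [hc]
  -- bilinear form in coordinates
  have hDc : ∀ u v, D u v = ∑ i, μe i * (c u i * c v i) := by
    intro u v
    conv_lhs => rw [← b.sum_repr' u]
    rw [map_sum, LinearMap.sum_apply]
    refine Finset.sum_congr rfl fun i _ => ?_
    rw [map_smul, LinearMap.smul_apply, heig, smul_eq_mul]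
    ring
  have hnc : ∀ u : E, ‖u‖ ^ 2 = ∑ i, (c u i) ^ 2 := by
    intro u
    have h2 := b.sum_inner_mul_inner u u
    rw [← real_inner_self_eq_norm_sq, ← h2]
    refine Finset.sum_congr rfl fun i _ => ?_
    simp only [hc, real_inner_comm u (b i)]
    ring
  -- Dt in coordinates
  have hDtc : ∀ u, Dt u u = ∑ i, (if i ∈ s' then μe i * (c u i) ^ 2 else lam * (c u i) ^ 2) := by
    intro u
    rw [hDt, real_inner_self_eq_norm_sq, hDc, hnc]
    have h1 : ∀ i, μe i * (c (P u) i * c (P u) i)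
        = if i ∈ s' then μe i * (c u i) ^ 2 else 0 := by
      intro i
      have := hPc u i
      simp only [hc] at this ⊢
      rw [this]
      split <;> ring
    have h2 : ∀ i, (c (u - P u) i) ^ 2 = if i ∈ s' then 0 else (c u i) ^ 2 := by
      intro i
      have := hQc u i
      simp only [hc] at this ⊢
      rw [this]
      split <;> ring
    rw [Finset.sum_congr rfl fun i _ => h1 i, Finset.sum_congr rfl fun i _ => h2 i,
      Finset.mul_sum, ← Finset.sum_add_distrib]
    refine Finset.sum_congr rfl fun i _ => ?_
    split <;> simp
  -- Part 1
  have part1 : ∀ u, Dt u u ≤ D u u := by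
    intro u
    rw [hDtc u, hDc u u]
    refine Finset.sum_le_sum fun i _ => ?_
    split_ifs with h
    · exact le_of_eq (by ring)
    · have hgt : lam' < μe i := by
        simp only [hs', Finset.mem_filter, Finset.mem_univ, true_and] at h
        exact lt_of_not_ge h
      nlinarith [sq_nonneg (c u i)]
  -- Rayleigh bound
  set C : ℝ := ∑ i, μe i with hC
  have hcle : ∀ (u : E) i, (c u i) ^ 2 ≤ ‖u‖ ^ 2 := by
    intro u i
    rw [hnc u]
    exact Finset.single_le_sum (f := fun k => c u k ^ 2) (fun k _ => sq_nonneg (c u k)) (Finset.mem_univ i)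
  have hDle : ∀ u : E, D u u ≤ C * ‖u‖ ^ 2 := by
    intro u
    rw [hDc]
    calc ∑ i, μe i * (c u i * c u i) ≤ ∑ i, μe i * ‖u‖ ^ 2 :=
          Finset.sum_le_sum fun i _ => mul_le_mul_of_nonneg_left
            (by have := hcle u i; nlinarith [sq_nonneg (c u i)]) (hmu i)
      _ = C * ‖u‖ ^ 2 := by rw [← Finset.sum_mul]
  have hDtle : ∀ u : E, Dt u u ≤ C * ‖u‖ ^ 2 := fun u => (part1 u).trans (hDle u)
  -- bounded above
  have hbddA : ∀ (B : E → E → ℝ), (∀ u, B u u ≤ C * ‖u‖ ^ 2) → ∀ V : Submodule ℝ E,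
      BddAbove (Set.range fun v : {v : E // v ∈ V ∧ v ≠ 0} => B v v / ‖(v : E)‖ ^ 2) := by
    intro B hB V
    refine ⟨C, ?_⟩
    rintro x ⟨v, rfl⟩
    have hv : (0 : ℝ) < ‖(v : E)‖ ^ 2 := pow_pos (norm_pos_iff.mpr v.2.2) 2
    rw [div_le_iff₀ hv]
    exact hB v
  have hle_sup : ∀ (B : E → E → ℝ), (∀ u, B u u ≤ C * ‖u‖ ^ 2) → ∀ (V : Submodule ℝ E)
      (v : E), v ∈ V → v ≠ 0 → B v v / ‖v‖ ^ 2 ≤ rayleighSup B V := by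
    intro B hB V v hv hv0
    exact le_ciSup (hbddA B hB V) ⟨v, hv, hv0⟩
  have hne : ∀ V : Submodule ℝ E, 1 ≤ Module.finrank ℝ V → ∃ v, v ∈ V ∧ v ≠ 0 := by
    intro V hV
    by_contra h
    push_neg at h
    have hbot : V = ⊥ := (Submodule.eq_bot_iff V).mpr h
    rw [hbot, finrank_bot] at hV
    omega
  have hsup0 : ∀ V : Submodule ℝ E, 1 ≤ Module.finrank ℝ V →
      0 ≤ rayleighSup (fun u v => D u v) V := by
    intro V hV
    obtain ⟨v, hv, hv0⟩ := hne V hV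
    refine le_trans ?_ (hle_sup (fun u v => D u v) hDle V v hv hv0)
    exact div_nonneg (hpsd v) (sq_nonneg _)
  -- pointwise comparison
  have hpoint : ∀ v : E, P v ≠ 0 →
      min lam (D (P v) (P v) / ‖P v‖ ^ 2) ≤ Dt v v / ‖v‖ ^ 2 := by
    intro v hPv
    have hDtv : Dt v v = D (P v) (P v) + lam * ‖v - P v‖ ^ 2 := by
      rw [hDt, real_inner_self_eq_norm_sq]
    have hn : ‖v‖ ^ 2 = ‖P v‖ ^ 2 + ‖v - P v‖ ^ 2 := by
      rw [hnc v, hnc (P v), hnc (v - P v), ← Finset.sum_add_distrib]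
      refine Finset.sum_congr rfl fun i _ => ?_
      have h1 := hPc v i
      have h2 := hQc v i
      simp only [hc] at h1 h2 ⊢
      rw [h1, h2]
      split <;> ring
    rw [hDtv, hn]
    exact aux_min_div lam _ _ _ hlam (hpsd _)
      (pow_pos (norm_pos_iff.mpr hPv) 2) (sq_nonneg _)
  -- linearity of P
  have hPadd : ∀ u w, P (u + w) = P u + P w := by
    intro u w
    rw [hP, hP, hP, ← Finset.sum_add_distrib]
    refine Finset.sum_congr rfl fun i _ => ?_
    rw [inner_add_right, add_smul]
  have hPsmul : ∀ (r : ℝ) (u : E), P (r • u) = r • P u := by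
    intro r u
    rw [hP, hP, Finset.smul_sum]
    refine Finset.sum_congr rfl fun i _ => ?_
    rw [real_inner_smul_right, smul_smul]
  set Plin : E →ₗ[ℝ] E := { toFun := P, map_add' := hPadd, map_smul' := hPsmul } with hPlin
  have hPlina : ∀ u, Plin u = P u := fun u => rfl
  refine ⟨part1, ?_⟩
  intro L j hj1 hj2
  -- the index type for Dt is nonempty
  have hLex : ∃ V : Submodule ℝ E, V ≤ L ∧ Module.finrank ℝ V = j := by
    obtain ⟨f, hf⟩ := exists_linearIndependent_of_le_finrank (R := ℝ) (M := L) (n := j) hj2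
    have hg : LinearIndependent ℝ (fun i : Fin j => (f i : E)) :=
      hf.map' L.subtype L.ker_subtype
    refine ⟨Submodule.span ℝ (Set.range fun i : Fin j => (f i : E)), ?_, ?_⟩
    · rw [Submodule.span_le]
      rintro x ⟨i, rfl⟩
      exact (f i).2
    · rw [finrank_span_eq_card hg, Fintype.card_fin]
  haveI : Nonempty {V : Submodule ℝ E // V ≤ L ∧ Module.finrank ℝ V = j} :=
    ⟨⟨hLex.choose, hLex.choose_spec⟩⟩
  have hbbD : BddBelow (Set.range fun V' : {V : Submodule ℝ E //
      V ≤ (⊤ : Submodule ℝ E) ∧ Module.finrank ℝ V = j} =>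
      rayleighSup (fun u v => D u v) V') := by
    refine ⟨0, ?_⟩
    rintro x ⟨V', rfl⟩
    exact hsup0 V' (by rw [V'.2.2]; exact hj1)
  show min lam (minimaxEigOn (fun u v => D u v) (⊤ : Submodule ℝ E) j) ≤
      ⨅ V : {V : Submodule ℝ E // V ≤ L ∧ Module.finrank ℝ V = j}, rayleighSup Dt V
  refine le_ciInf ?_
  rintro ⟨V, hVL, hVj⟩
  by_cases hker : ∃ v, v ∈ V ∧ v ≠ 0 ∧ P v = 0
  · obtain ⟨v, hv, hv0, hPv⟩ := hker
    have hval : Dt v v / ‖v‖ ^ 2 = lam := by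
      rw [hDt, hPv, sub_zero, real_inner_self_eq_norm_sq]
      have h0 : D (0 : E) (0 : E) = 0 := by simp
      rw [h0, zero_add, mul_div_assoc,
        div_self (ne_of_gt (pow_pos (norm_pos_iff.mpr hv0) 2)), mul_one]
    calc min lam (minimaxEigOn (fun u v => D u v) (⊤ : Submodule ℝ E) j)
        ≤ lam := min_le_left _ _
      _ = Dt v v / ‖v‖ ^ 2 := hval.symm
      _ ≤ rayleighSup Dt V := hle_sup Dt hDtle V v hv hv0
  · push_neg at hker
    set W : Submodule ℝ E := V.map Plin with hW
    have hWj : Module.finrank ℝ W = j := by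
      have hker0 : ∀ x : ↥V, (Plin.domRestrict V) x = 0 → x = 0 := by
        intro x hx
        by_contra hx0
        have hx1 : (x : E) ≠ 0 := fun h => hx0 (Subtype.ext h)
        exact hker (x : E) x.2 hx1 hx
      have hinj : Function.Injective (Plin.domRestrict V) :=
        LinearMap.ker_eq_bot.mp (LinearMap.ker_eq_bot'.mpr hker0)
      have hfr := LinearMap.finrank_range_of_inj hinj
      rw [LinearMap.range_domRestrict] at hfr
      rw [hW, hfr, hVj]
    have hj1W : 1 ≤ Module.finrank ℝ W := by rw [hWj]; exact hj1
    have hWex : ∀ w : E, w ∈ W → w ≠ 0 → ∃ v, v ∈ V ∧ v ≠ 0 ∧ P v = w := by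
      intro w hw hw0
      obtain ⟨v, hv, rfl⟩ := Submodule.mem_map.mp hw
      refine ⟨v, hv, ?_, rfl⟩
      rintro rfl
      exact hw0 (map_zero Plin)
    have hInfW : minimaxEigOn (fun u v => D u v) (⊤ : Submodule ℝ E) j ≤
        rayleighSup (fun u v => D u v) W :=
      ciInf_le hbbD ⟨W, le_top, hWj⟩
    refine le_trans (min_le_min le_rfl hInfW) ?_
    refine le_of_forall_lt fun z hz => ?_
    rw [lt_min_iff] at hz
    obtain ⟨hzlam, hzW⟩ := hz
    haveI : Nonempty {w : E // w ∈ W ∧ w ≠ 0} := by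
      obtain ⟨w, h1, h2⟩ := hne W hj1W
      exact ⟨⟨w, h1, h2⟩⟩
    have hzW' : z < ⨆ w : {w : E // w ∈ W ∧ w ≠ 0},
        (fun u v => D u v) (w : E) (w : E) / ‖(w : E)‖ ^ 2 := hzW
    obtain ⟨w, hwz⟩ := exists_lt_of_lt_ciSup hzW'
    obtain ⟨v, hv, hv0, hPvw⟩ := hWex w w.2.1 w.2.2
    have h1 : min lam (D (P v) (P v) / ‖P v‖ ^ 2) ≤ Dt v v / ‖v‖ ^ 2 :=
      hpoint v (by rw [hPvw]; exact w.2.2)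
    have h2 : z < min lam (D (P v) (P v) / ‖P v‖ ^ 2) := by
      rw [lt_min_iff]
      refine ⟨hzlam, ?_⟩
      rw [hPvw]
      exact hwz
    exact lt_of_lt_of_le (h2.trans_le h1) (hle_sup Dt hDtle V v hv hv0)
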